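/- Let C be a symmetric monoidal closed, small-complete, well-powered, locally small category with a small cogenerating family, and d : I → C a small diagram. Set Γ = ∫_X X^{Lim X^d} (which exists since X ↦ Lim X^d is an endofunctor of C). Then the arrows γ_i = ⟨(π_{i,X})‾⟩_X : d(i) → Γ form a cocone over d, and this cocone is weakly initial: for every cocone (δ_i : d(i) → D)_i there exists ψ : Γ → D with ψ ∘ γ_i = δ_i for all i. -/

import Mathlib

open CategoryTheory CategoryTheory.Limits CategoryTheory.MonoidalCategory
  CategoryTheory.MonoidalClosed Opposite

universe v u

variable {C : Type u} [Category.{v} C] [MonoidalCategory C] [SymmetricCategory C]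
  [MonoidalClosed C]

/-- The swap `f̄ : Y ⟶ Z^X` of an arrow `f : X ⟶ Z^Y`, defined as the transpose of
`ev ∘ (f ⊗ 1_Y) ∘ σ` (written here with the tensor-on-the-left convention). -/
noncomputable def swap {X Y Z : C} (f : X ⟶ (ihom Y).obj Z) : Y ⟶ (ihom X).obj Z :=
  MonoidalClosed.curry ((β_ X Y).hom ≫ Y ◁ f ≫ (ihom.ev Y).app Z)

lemma curry_comp_pre_app {A B Y Z : C} (f : B ⟶ A) (h : A ⊗ Y ⟶ Z) :
    curry h ≫ (pre f).app Z = curry (f ▷ Y ≫ h) := by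
  apply uncurry_injective
  rw [uncurry_natural_left, MonoidalClosed.uncurry_pre, ← Category.assoc, whisker_exchange,
    Category.assoc, ← uncurry_eq]
  simp only [uncurry_curry]

lemma swap_comp_ihom_map {X Y Z Z' : C} (f : X ⟶ (ihom Y).obj Z) (g : Z ⟶ Z') :
    swap f ≫ (ihom X).map g = swap (f ≫ (ihom Y).map g) := by
  rw [swap, swap, ← curry_natural_right]
  congr 1
  simp only [MonoidalCategory.whiskerLeft_comp, Category.assoc]
  congr 2
  exact ((ihom.ev Y).naturality g).symm

lemma swap_comp' {W X Y Z : C} (h : W ⟶ X) (f : X ⟶ (ihom Y).obj Z) :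
    swap (h ≫ f) = swap f ≫ (pre h).app Z := by
  rw [swap, swap, curry_comp_pre_app]
  congr 1
  rw [BraidedCategory.braiding_naturality_left_assoc]
  simp

lemma comp_swap {X Y Y' Z : C} (g : Y' ⟶ Y) (f : X ⟶ (ihom Y).obj Z) :
    g ≫ swap f = swap (f ≫ (pre g).app Z) := by
  apply uncurry_injective
  rw [swap, swap, uncurry_natural_left, uncurry_curry, uncurry_curry]
  simp only [MonoidalCategory.whiskerLeft_comp, Category.assoc]
  rw [MonoidalClosed.id_tensor_pre_app_comp_ev, whisker_exchange_assoc,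
    BraidedCategory.braiding_naturality_right_assoc]

lemma curry_comp_evalAt {L A D : C} (e : 𝟙_ C ⟶ L) (f : L ⊗ A ⟶ D) :
    curry f ≫ (λ_ _).inv ≫ e ▷ _ ≫ (ihom.ev L).app D = (λ_ A).inv ≫ e ▷ A ≫ f := by
  rw [MonoidalCategory.leftUnitor_inv_naturality_assoc, whisker_exchange_assoc, ← uncurry_eq,
    uncurry_curry]


variable [HasLimits C] {J : Type v} [Category.{v} J]

/-- The diagram `i ↦ X^{d(i)} : Jᵒᵖ ⥤ C`. -/
noncomputable def expDiagram (d : J ⥤ C) (X : C) : Jᵒᵖ ⥤ C :=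
  d.op ⋙ MonoidalClosed.internalHom.flip.obj X

/-- The endofunctor `X ↦ Lim X^d` of `C`. -/
noncomputable def limExp (d : J ⥤ C) : C ⥤ C :=
  MonoidalClosed.internalHom.flip ⋙ (Functor.whiskeringLeft Jᵒᵖ Cᵒᵖ C).obj d.op ⋙ lim

/-- The bifunctor `(X, Y) ↦ Y^{Lim X^d} : Cᵒᵖ ⥤ C ⥤ C`. -/
noncomputable def limExpBifunctor (d : J ⥤ C) : Cᵒᵖ ⥤ C ⥤ C :=
  (limExp d).op ⋙ MonoidalClosed.internalHom

lemma limExp_map_π (d : J ⥤ C) {X Y : C} (g : X ⟶ Y) (i : J) :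
    (limExp d).map g ≫ limit.π (expDiagram d Y) (op i) =
      limit.π (expDiagram d X) (op i) ≫ (ihom (d.obj i)).map g :=
  limMap_π _ _


/-- For `Γ = ∫_X X^{Lim X^d}` (which exists as `C` is moreover well-powered with a small
cogenerating family), the arrows `γ_i = ⟨(π_{i,X})‾⟩_X : d(i) ⟶ Γ` form a cocone over
`d`, and this cocone is weakly initial. -/
theorem weakly_initial_cocone_of_end [WellPowered.{v} C] (𝒢 : Set C) [Small.{v} 𝒢]
    (h𝒢 : ObjectProperty.IsCoseparating 𝒢) (d : J ⥤ C) [HasEnd (limExpBifunctor d)] :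
    ∃ γ : ∀ i : J, d.obj i ⟶ end_ (limExpBifunctor d),
      (∀ (i : J) (X : C),
          γ i ≫ end_.π (limExpBifunctor d) X = swap (limit.π (expDiagram d X) (op i))) ∧
      (∀ (i j : J) (θ : i ⟶ j), d.map θ ≫ γ j = γ i) ∧
      (∀ D : Cocone d, ∃ ψ : end_ (limExpBifunctor d) ⟶ D.pt,
          ∀ i : J, γ i ≫ ψ = D.ι.app i) := by
  have hwedge : ∀ (i : J) ⦃X Y : C⦄ (g : X ⟶ Y),
      swap (limit.π (expDiagram d X) (op i)) ≫ ((limExpBifunctor d).obj (op X)).map g =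
      swap (limit.π (expDiagram d Y) (op i)) ≫ ((limExpBifunctor d).map g.op).app Y := by
    intro i X Y g
    show swap _ ≫ (ihom ((limExp d).obj X)).map g = swap _ ≫ (pre ((limExp d).map g)).app Y
    erw [swap_comp_ihom_map, ← swap_comp', limExp_map_π]
    rfl
  refine ⟨fun i => end_.lift (fun X => swap (limit.π (expDiagram d X) (op i))) (hwedge i),
    fun i X => end_.lift_π _ _ _, ?_, ?_⟩
  · intro i j θ
    apply end_.hom_ext
    intro X
    erw [Category.assoc, end_.lift_π, end_.lift_π, comp_swap]
    congr 1
    exact limit.w (expDiagram d X) θ.op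
  · intro D
    let ec : Cone (expDiagram d D.pt) :=
      { pt := 𝟙_ C
        π :=
          { app := fun i => curry ((ρ_ (d.obj i.unop)).hom ≫ D.ι.app i.unop)
            naturality := fun i j f => by
              show 𝟙 _ ≫ _ = curry _ ≫ (pre (d.map f.unop)).app _
              rw [Category.id_comp, curry_comp_pre_app]
              simp only [Functor.const_obj_obj]
              rw [MonoidalCategory.rightUnitor_naturality_assoc, Cocone.w] } }
    let e : 𝟙_ C ⟶ limit (expDiagram d D.pt) := limit.lift _ ec
    refine ⟨end_.π (limExpBifunctor d) D.pt ≫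
      (λ_ ((ihom (limit (expDiagram d D.pt))).obj D.pt)).inv ≫ e ▷ _ ≫
      (ihom.ev (limit (expDiagram d D.pt))).app D.pt, ?_⟩
    intro i
    erw [← Category.assoc, end_.lift_π]
    show MonoidalClosed.curry ((β_ (limit (expDiagram d D.pt)) (d.obj i)).hom ≫
        d.obj i ◁ limit.π (expDiagram d D.pt) (op i) ≫ (ihom.ev (d.obj i)).app D.pt) ≫
      (λ_ ((ihom (limit (expDiagram d D.pt))).obj D.pt)).inv ≫
        e ▷ (ihom (limit (expDiagram d D.pt))).obj D.pt ≫
        (ihom.ev (limit (expDiagram d D.pt))).app D.pt = D.ι.app i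
    have hev := curry_comp_evalAt e ((β_ (limit (expDiagram d D.pt)) (d.obj i)).hom ≫
        d.obj i ◁ limit.π (expDiagram d D.pt) (op i) ≫ (ihom.ev (d.obj i)).app D.pt)
    simp only [Functor.id_obj] at hev
    rw [hev]
    erw [BraidedCategory.braiding_naturality_left_assoc,
      ← MonoidalCategory.whiskerLeft_comp_assoc, limit.lift_π]
    show (λ_ (d.obj i)).inv ≫ (β_ (𝟙_ C) (d.obj i)).hom ≫
      d.obj i ◁ MonoidalClosed.curry
        ((ρ_ (d.obj i)).hom ≫ D.ι.app i : d.obj i ⊗ 𝟙_ C ⟶ D.pt) ≫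
      (ihom.ev (d.obj i)).app D.pt = D.ι.app i
    have hu : d.obj i ◁ MonoidalClosed.curry
          ((ρ_ (d.obj i)).hom ≫ D.ι.app i : d.obj i ⊗ 𝟙_ C ⟶ D.pt) ≫
        (ihom.ev (d.obj i)).app D.pt =
        ((ρ_ (d.obj i)).hom ≫ D.ι.app i : d.obj i ⊗ 𝟙_ C ⟶ D.pt) := by
      rw [← uncurry_eq, uncurry_curry]
    rw [hu]
    have hb := braiding_rightUnitor (C := C) (d.obj i)
    rw [reassoc_of% hb]
    simp
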